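/- Let x, y, q be complex numbers with |q| < 1, and suppose x²y·q^(k+1) ≠ −1 for every integer k ≥ 0. Then Σ_{i,j,k≥0} q^(C(k,2)+C(i+j+k,2)+2j+2k+i) · x^(2i+2k+j) · y^(2j+2k+i) / ((q;q)_i · (q;q)_j · (q;q)_k) = (−x²yq;q)_∞ · Σ_{m≥0} (−x;q)_m · q^(C(m,2)+2m) · (xy²)^m / ((q;q)_m · (−x²yq;q)_m), where C(m,2) = m(m−1)/2. -/

import Mathlib

open Filter Topology

/-- Finite q-Pochhammer symbol `(a; q)_n = ∏_{k=0}^{n-1} (1 - a q^k)`. -/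
noncomputable def qPoch (a q : ℂ) (n : ℕ) : ℂ := ∏ k ∈ Finset.range n, (1 - a * q ^ k)

/-- Infinite q-Pochhammer symbol `(a; q)_∞ = ∏_{k=0}^{∞} (1 - a q^k)`. -/
noncomputable def qPochInf (a q : ℂ) : ℂ := ∏' k : ℕ, (1 - a * q ^ k)

lemma choose2_succ (m : ℕ) : (m+1).choose 2 = m.choose 2 + m := by
  simp [Nat.choose_succ_succ, Nat.choose_one_right]; omega

lemma choose2_add (a b : ℕ) : (a+b).choose 2 = a.choose 2 + b.choose 2 + a*b := by
  induction b with
  | zero => simp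
  | succ n ih =>
    have h1 := choose2_succ (a+n)
    have h2 := choose2_succ n
    rw [show a+(n+1) = (a+n)+1 from by omega, h1, ih, h2]
    ring

lemma qPoch_zero (a q : ℂ) : qPoch a q 0 = 1 := by simp [qPoch]

lemma qPoch_succ (a q : ℂ) (n : ℕ) : qPoch a q (n+1) = qPoch a q n * (1 - a * q ^ n) :=
  Finset.prod_range_succ _ _

lemma one_sub_ne {q : ℂ} (hq : ‖q‖ < 1) (n : ℕ) : 1 - q * q ^ n ≠ 0 := by
  intro h
  have h2 : q * q ^ n = 1 := by linear_combination -h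
  have : ‖q * q ^ n‖ < 1 := by
    rw [norm_mul, norm_pow]
    calc ‖q‖ * ‖q‖ ^ n ≤ ‖q‖ * 1 := by
          exact mul_le_mul_of_nonneg_left (pow_le_one₀ (norm_nonneg q) hq.le) (norm_nonneg q)
      _ < 1 := by simpa using hq
  rw [h2] at this; simp at this

lemma qPoch_qq_ne_zero {q : ℂ} (hq : ‖q‖ < 1) (n : ℕ) : qPoch q q n ≠ 0 := by
  unfold qPoch
  exact Finset.prod_ne_zero_iff.mpr fun k _ => one_sub_ne hq k

lemma norm_qPoch_pos {q : ℂ} (hq : ‖q‖ < 1) (n : ℕ) : 0 < ‖qPoch q q n‖ :=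
  norm_pos_iff.mpr (qPoch_qq_ne_zero hq n)

lemma qPoch_def (a q : ℂ) (n : ℕ) : qPoch a q n = ∏ k ∈ Finset.range n, (1 - a * q ^ k) := rfl

lemma qPochInf_def (a q : ℂ) : qPochInf a q = ∏' k : ℕ, (1 - a * q ^ k) := rfl

set_option maxHeartbeats 1000000 in
lemma summable_base {q : ℂ} (hq : ‖q‖ < 1) (M : ℝ) (hM : 0 ≤ M) :
    Summable (fun n : ℕ => ‖q‖ ^ (n.choose 2) * M ^ n / ‖qPoch q q n‖) := by
  set r := ‖q‖ with hr
  have hr0 : 0 ≤ r := norm_nonneg q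
  apply summable_of_ratio_norm_eventually_le (r := 1/2) (by norm_num)
  have h1 : Tendsto (fun n : ℕ => r ^ n * M) atTop (𝓝 0) := by
    simpa using (tendsto_pow_atTop_nhds_zero_of_lt_one hr0 hq).mul_const M
  have h2 : Tendsto (fun n : ℕ => r ^ (n+1)) atTop (𝓝 0) := by
    exact (tendsto_pow_atTop_nhds_zero_of_lt_one hr0 hq).comp (tendsto_add_atTop_nat 1)
  filter_upwards [h1.eventually_le_const (by norm_num : (0:ℝ) < 1/4),
    h2.eventually_le_const (by norm_num : (0:ℝ) < 1/2)] with n hn1 hn2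
  have hP := norm_qPoch_pos hq n
  have hc : (1:ℝ)/2 ≤ ‖1 - q * q ^ n‖ := by
    have := norm_sub_norm_le (1:ℂ) (q * q ^ n)
    have hqn : ‖q * q ^ n‖ = r ^ (n+1) := by rw [norm_mul, norm_pow, pow_succ]; ring
    simp only [norm_one] at this
    rw [hqn] at this; linarith
  have hsplit : ‖q‖ ^ ((n+1).choose 2) * M ^ (n+1) / ‖qPoch q q (n+1)‖
      = (r ^ (n.choose 2) * M ^ n / ‖qPoch q q n‖) * ((r ^ n * M) / ‖1 - q * q ^ n‖) := by
    rw [choose2_succ, qPoch_succ, norm_mul, pow_add, pow_succ]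
    field_simp
    rw [hr]
    ring
  rw [Real.norm_of_nonneg (by positivity), Real.norm_of_nonneg (by positivity), hsplit]
  have hb : (r ^ n * M) / ‖1 - q * q ^ n‖ ≤ 1/2 := by
    rw [div_le_iff₀ (by linarith)]
    nlinarith [mul_nonneg (pow_nonneg hr0 n) hM]
  calc (r ^ (n.choose 2) * M ^ n / ‖qPoch q q n‖) * ((r ^ n * M) / ‖1 - q * q ^ n‖)
      ≤ (r ^ (n.choose 2) * M ^ n / ‖qPoch q q n‖) * (1/2) := by
        apply mul_le_mul_of_nonneg_left hb (by positivity)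
    _ = 1/2 * (r ^ (n.choose 2) * M ^ n / ‖qPoch q q n‖) := by ring

noncomputable def eulerT (q z : ℂ) (k : ℕ) : ℂ := q ^ (k.choose 2) * z ^ k / qPoch q q k

noncomputable def eulerF (q z : ℂ) : ℂ := ∑' k, eulerT q z k

lemma eulerT_def (q z : ℂ) (k : ℕ) : eulerT q z k = q ^ (k.choose 2) * z ^ k / qPoch q q k := rfl

lemma eulerF_def (q z : ℂ) : eulerF q z = ∑' k, eulerT q z k := rfl

lemma norm_eulerT (q z : ℂ) (k : ℕ) :
    ‖eulerT q z k‖ = ‖q‖ ^ (k.choose 2) * ‖z‖ ^ k / ‖qPoch q q k‖ := by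
  rw [eulerT, norm_div, norm_mul, norm_pow, norm_pow]

lemma summable_eulerT {q : ℂ} (hq : ‖q‖ < 1) (z : ℂ) : Summable (eulerT q z) := by
  apply Summable.of_norm
  simp only [norm_eulerT]
  exact summable_base hq ‖z‖ (norm_nonneg z)

lemma eulerT_zero (q z : ℂ) : eulerT q z 0 = 1 := by
  simp [eulerT, qPoch_zero]

lemma eulerT_succ_sub {q : ℂ} (hq : ‖q‖ < 1) (z : ℂ) (k : ℕ) :
    eulerT q z (k+1) - eulerT q (q*z) (k+1) = z * eulerT q (q*z) k := by
  have h1 := qPoch_qq_ne_zero hq k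
  have h2 := one_sub_ne hq k
  rw [eulerT, eulerT, eulerT, choose2_succ, qPoch_succ, pow_add]
  field_simp
  linear_combination (q ^ k.choose 2 * q ^ k * z * z ^ k) * mul_inv_cancel₀ h2

lemma eulerF_fe {q : ℂ} (hq : ‖q‖ < 1) (z : ℂ) :
    eulerF q z = (1+z) * eulerF q (q*z) := by
  have hs1 := summable_eulerT hq z
  have hs2 := summable_eulerT hq (q*z)
  have hdiff : eulerF q z - eulerF q (q*z) = ∑' k, (eulerT q z k - eulerT q (q*z) k) :=
    (Summable.tsum_sub hs1 hs2).symm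
  have hzero : eulerT q z 0 - eulerT q (q*z) 0 = 0 := by
    rw [eulerT_zero, eulerT_zero]; ring
  have hshift : ∑' k, (eulerT q z k - eulerT q (q*z) k)
      = ∑' k, (eulerT q z (k+1) - eulerT q (q*z) (k+1)) := by
    rw [Summable.tsum_eq_zero_add (hs1.sub hs2), hzero, zero_add]
  have hfin : ∑' k, (eulerT q z (k+1) - eulerT q (q*z) (k+1)) = z * eulerF q (q*z) := by
    simp only [eulerT_succ_sub hq]
    rw [tsum_mul_left]; rfl
  have : eulerF q z - eulerF q (q*z) = z * eulerF q (q*z) := by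
    rw [hdiff, hshift, hfin]
  linear_combination this

lemma eulerF_prod {q : ℂ} (hq : ‖q‖ < 1) (z : ℂ) (m : ℕ) :
    eulerF q z = (∏ k ∈ Finset.range m, (1 + z * q ^ k)) * eulerF q (z * q ^ m) := by
  induction m with
  | zero => simp
  | succ n ih =>
    rw [ih, Finset.prod_range_succ, eulerF_fe hq (z * q ^ n)]
    rw [show q * (z * q ^ n) = z * q ^ (n+1) by rw [pow_succ]; ring]
    ring

set_option maxHeartbeats 1000000 in
-- bound: for ‖w‖ ≤ B', ‖eulerF q w - 1‖ ≤ ‖w‖ * D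
lemma eulerF_sub_one_bound {q : ℂ} (hq : ‖q‖ < 1) (B : ℝ) (hB : 1 ≤ B) :
    ∃ D : ℝ, 0 ≤ D ∧ ∀ w : ℂ, ‖w‖ ≤ B → ‖eulerF q w - 1‖ ≤ ‖w‖ * D := by
  have hB0 : (0:ℝ) < B := by linarith
  have hsum : Summable (fun k : ℕ => ‖q‖ ^ ((k+1).choose 2) * B ^ (k+1) / ‖qPoch q q (k+1)‖) :=
    (summable_nat_add_iff 1).mpr (summable_base hq B (by linarith))
  have hsumc : Summable (fun k : ℕ => ‖q‖ ^ ((k+1).choose 2) * B ^ k / ‖qPoch q q (k+1)‖) := by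
    have := hsum.mul_left (B⁻¹)
    refine this.congr fun k => ?_
    rw [pow_succ]
    rw [show B⁻¹ * (‖q‖ ^ ((k+1).choose 2) * (B ^ k * B) / ‖qPoch q q (k+1)‖)
        = ‖q‖ ^ ((k+1).choose 2) * B ^ k / ‖qPoch q q (k+1)‖ * (B⁻¹ * B) from by ring]
    rw [inv_mul_cancel₀ hB0.ne', mul_one]
  refine ⟨∑' k, ‖q‖ ^ ((k+1).choose 2) * B ^ k / ‖qPoch q q (k+1)‖,
    tsum_nonneg fun k => by positivity, fun w hw => ?_⟩
  have hs := summable_eulerT hq w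
  have h1 : eulerF q w - 1 = ∑' k, eulerT q w (k+1) := by
    rw [eulerF, Summable.tsum_eq_zero_add hs, eulerT_zero]; ring
  rw [h1]
  calc ‖∑' k, eulerT q w (k+1)‖ ≤ ∑' k, ‖eulerT q w (k+1)‖ :=
        norm_tsum_le_tsum_norm ((summable_nat_add_iff 1).mpr hs).norm
    _ ≤ ∑' k, ‖w‖ * (‖q‖ ^ ((k+1).choose 2) * B ^ k / ‖qPoch q q (k+1)‖) := by
        apply ((summable_nat_add_iff 1).mpr hs).norm.tsum_le_tsum _ (hsumc.mul_left ‖w‖)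
        intro k
        rw [norm_eulerT, show ‖w‖ * (‖q‖ ^ ((k+1).choose 2) * B ^ k / ‖qPoch q q (k+1)‖)
          = ‖q‖ ^ ((k+1).choose 2) * (‖w‖ * B ^ k) / ‖qPoch q q (k+1)‖ from by ring]
        have hb : ‖w‖ ^ (k+1) ≤ ‖w‖ * B ^ k := by
          rw [pow_succ, mul_comm]
          apply mul_le_mul_of_nonneg_left _ (norm_nonneg w)
          exact pow_le_pow_left₀ (norm_nonneg w) hw k
        gcongr
    _ = ‖w‖ * ∑' k, ‖q‖ ^ ((k+1).choose 2) * B ^ k / ‖qPoch q q (k+1)‖ := by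
        rw [tsum_mul_left]

lemma eulerF_tendsto {q : ℂ} (hq : ‖q‖ < 1) (z : ℂ) :
    Tendsto (fun m : ℕ => eulerF q (z * q ^ m)) atTop (𝓝 1) := by
  obtain ⟨D, hD0, hD⟩ := eulerF_sub_one_bound hq (max 1 ‖z‖) (le_max_left _ _)
  rw [tendsto_iff_norm_sub_tendsto_zero]
  apply squeeze_zero (fun m => norm_nonneg _) (g := fun m => ‖z‖ * ‖q‖ ^ m * D)
  · intro m
    have hw : ‖z * q ^ m‖ ≤ max 1 ‖z‖ := by
      rw [norm_mul, norm_pow]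
      calc ‖z‖ * ‖q‖ ^ m ≤ ‖z‖ * 1 :=
            mul_le_mul_of_nonneg_left (pow_le_one₀ (norm_nonneg q) hq.le) (norm_nonneg z)
        _ = ‖z‖ := mul_one _
        _ ≤ max 1 ‖z‖ := le_max_right _ _
    calc ‖eulerF q (z * q ^ m) - 1‖ ≤ ‖z * q ^ m‖ * D := hD _ hw
      _ = ‖z‖ * ‖q‖ ^ m * D := by rw [norm_mul, norm_pow]
  · have : Tendsto (fun m : ℕ => ‖q‖ ^ m) atTop (𝓝 0) :=
      tendsto_pow_atTop_nhds_zero_of_lt_one (norm_nonneg q) hq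
    simpa using (this.const_mul ‖z‖).mul_const D

lemma multipliable_one_add {q : ℂ} (hq : ‖q‖ < 1) (z : ℂ) (hz : ∀ k : ℕ, 1 + z * q ^ k ≠ 0) :
    Multipliable (fun k : ℕ => 1 + z * q ^ k) := by
  have hlog : Summable (fun k : ℕ => Complex.log (1 + z * q ^ k)) := by
    apply Summable.of_norm
    obtain ⟨N, hN⟩ : ∃ N : ℕ, ∀ n ≥ N, ‖z‖ * ‖q‖ ^ n ≤ 1/2 := by
      have : Tendsto (fun n : ℕ => ‖z‖ * ‖q‖ ^ n) atTop (𝓝 0) := by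
        simpa using (tendsto_pow_atTop_nhds_zero_of_lt_one (norm_nonneg q) hq).const_mul ‖z‖
      exact (this.eventually_le_const (by norm_num : (0:ℝ) < 1/2)).exists_forall_of_atTop
    apply (summable_nat_add_iff N).mp
    have hgeo : Summable (fun n : ℕ => (3/2) * (‖z‖ * ‖q‖ ^ N) * ‖q‖ ^ n) :=
      (summable_geometric_of_lt_one (norm_nonneg q) hq).mul_left _
    apply Summable.of_nonneg_of_le (fun n => norm_nonneg _) _ hgeo
    intro n
    have hsmall : ‖z * q ^ (n + N)‖ ≤ 1/2 := by
      rw [norm_mul, norm_pow]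
      exact hN (n+N) (by omega)
    calc ‖Complex.log (1 + z * q ^ (n+N))‖ ≤ (3/2) * ‖z * q ^ (n+N)‖ :=
          Complex.norm_log_one_add_half_le_self hsmall
      _ = 3/2 * (‖z‖ * ‖q‖ ^ N) * ‖q‖ ^ n := by
          rw [norm_mul, norm_pow, pow_add]
          ring
  exact Complex.multipliable_of_summable_log hlog

lemma euler_prod_eq {q : ℂ} (hq : ‖q‖ < 1) (z : ℂ) (hz : ∀ k : ℕ, 1 + z * q ^ k ≠ 0) :
    ∏' k : ℕ, (1 + z * q ^ k) = eulerF q z := by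
  have hm := multipliable_one_add hq z hz
  have h1 : Tendsto (fun m : ℕ => (∏ k ∈ Finset.range m, (1 + z * q ^ k)) * eulerF q (z * q ^ m))
      atTop (𝓝 ((∏' k : ℕ, (1 + z * q ^ k)) * 1)) :=
    (hm.hasProd.tendsto_prod_nat).mul (eulerF_tendsto hq z)
  have h2 : Tendsto (fun _ : ℕ => eulerF q z) atTop (𝓝 (eulerF q z)) := tendsto_const_nhds
  have : eulerF q z = (∏' k : ℕ, (1 + z * q ^ k)) * 1 := by
    apply tendsto_nhds_unique _ h1
    simpa only [← eulerF_prod hq z] using h2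
  rw [this, mul_one]

lemma qPoch_neg_succ' (x q : ℂ) (m : ℕ) :
    qPoch (-x) q (m+1) = (1 + x) * qPoch (-(x*q)) q m := by
  rw [qPoch_def, qPoch_def, Finset.prod_range_succ']
  have h1 : ∀ k ∈ Finset.range m, (1 - (-x) * q ^ (k+1)) = (1 - (-(x*q)) * q ^ k) := by
    intro k _
    rw [pow_succ']
    ring
  rw [Finset.prod_congr rfl h1]
  simp only [pow_zero]
  ring

set_option maxHeartbeats 1000000 in
lemma qbinom {q : ℂ} (hq : ‖q‖ < 1) :
    ∀ (m : ℕ) (x : ℂ),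
      (∑ j ∈ Finset.range (m+1),
        q ^ (j.choose 2) * x ^ j / (qPoch q q j * qPoch q q (m-j))) * qPoch q q m
      = qPoch (-x) q m := by
  intro m
  induction m with
  | zero => intro x; simp [qPoch_zero]
  | succ m ih =>
    intro x
    have hP := qPoch_qq_ne_zero hq
    have hO := one_sub_ne hq
    set u : ℕ → ℂ := fun j => q ^ (j.choose 2) * x ^ j / (qPoch q q j * qPoch q q (m+1-j))
      with hu
    set v : ℕ → ℂ := fun j => q ^ (j.choose 2) * (x*q) ^ j / (qPoch q q j * qPoch q q (m-j))
      with hv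
    have hstar : ∀ j' ∈ Finset.range m,
        u (j'+1) * (1 - q*q^m) = v (j'+1) + x * v j' := by
      intro j' hj'
      have hj : j' < m := Finset.mem_range.mp hj'
      obtain ⟨d, rfl⟩ : ∃ d, m = j' + 1 + d := ⟨m - (j'+1), by omega⟩
      simp only [hu, hv]
      rw [show (j'+1+d)+1-(j'+1) = d+1 from by omega, show (j'+1+d)-(j'+1) = d from by omega,
          show (j'+1+d)-j' = d+1 from by omega,
          show j'+1+d = j'+d+1 from by omega,
          choose2_succ, qPoch_succ q q j', qPoch_succ q q d,
          pow_succ q (j'+d), pow_add q j' d, pow_add q (j'.choose 2) j',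
          mul_pow x q (j'+1), mul_pow x q j', pow_succ x j', pow_succ q j']
      field_simp [hP j', hP d, hO j', hO d]
      linear_combination (q ^ j'.choose 2 * q ^ j' * x * x ^ j') * mul_inv_cancel₀ (hO j')
    have hE1 : u 0 * (1 - q*q^m) = v 0 := by
      simp only [hu, hv]
      rw [show Nat.choose 0 2 = 0 from rfl]
      simp only [Nat.sub_zero, pow_zero, qPoch_zero, one_mul, mul_one, qPoch_succ]
      field_simp [hP m, hO m]
    have hE2 : u (m+1) * (1 - q*q^m) = x * v m := by
      simp only [hu, hv, Nat.sub_self, qPoch_zero, mul_one]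
      rw [choose2_succ, qPoch_succ, pow_add q (m.choose 2) m, mul_pow x q m, pow_succ x m]
      field_simp [hP m, hO m]
      linear_combination (q ^ m.choose 2 * q ^ m * x * x ^ m) * mul_inv_cancel₀ (hO m)
    set S := ∑ j ∈ Finset.range (m+1), v j with hS
    have key : (∑ j ∈ Finset.range (m+2), u j) * (1 - q*q^m) = (1+x) * S := by
      rw [Finset.sum_mul, Finset.sum_range_succ' (fun j => u j * (1 - q*q^m)) (m+1),
          Finset.sum_range_succ (fun j' => u (j'+1) * (1 - q*q^m)) m,
          Finset.sum_congr rfl hstar, hE1, hE2, Finset.sum_add_distrib, ← Finset.mul_sum]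
      have e1 : S = (∑ j' ∈ Finset.range m, v (j'+1)) + v 0 := Finset.sum_range_succ' v m
      have e2 : S = (∑ j' ∈ Finset.range m, v j') + v m := Finset.sum_range_succ v m
      linear_combination -e1 - x * e2
    have hfin : (∑ j ∈ Finset.range (m+2), u j) * qPoch q q (m+1) = qPoch (-x) q (m+1) := by
      calc (∑ j ∈ Finset.range (m+2), u j) * qPoch q q (m+1)
          = ((∑ j ∈ Finset.range (m+2), u j) * (1 - q*q^m)) * qPoch q q m := by
            rw [qPoch_succ]; ring
        _ = ((1+x) * S) * qPoch q q m := by rw [key]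
        _ = (1+x) * (S * qPoch q q m) := by ring
        _ = (1+x) * qPoch (-(x*q)) q m := by rw [hS, hv, ih (x*q)]
        _ = qPoch (-x) q (m+1) := (qPoch_neg_succ' x q m).symm
    exact hfin

lemma tsum_antidiag (g : ℕ × ℕ → ℂ) (hg : Summable g) :
    ∑' p : ℕ × ℕ, g p = ∑' n : ℕ, ∑ p ∈ Finset.HasAntidiagonal.antidiagonal n, g p := by
  rw [← Finset.HasAntidiagonal.sigmaAntidiagonalEquivProd.tsum_eq g]
  rw [Summable.tsum_sigma (f := fun c : (Σ n : ℕ, Finset.HasAntidiagonal.antidiagonal n) =>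
      g (Finset.HasAntidiagonal.sigmaAntidiagonalEquivProd c))
    (Finset.HasAntidiagonal.sigmaAntidiagonalEquivProd.summable_iff.mpr hg)]
  exact tsum_congr fun n => Finset.tsum_subtype (Finset.HasAntidiagonal.antidiagonal n) g

set_option maxHeartbeats 2000000 in
theorem stmt_12 (x y q : ℂ) (hq : ‖q‖ < 1)
    (hxy : ∀ k : ℕ, x ^ 2 * y * q ^ (k + 1) ≠ -1) :
    (∑' t : ℕ × ℕ × ℕ,
        q ^ (Nat.choose t.2.2 2 + Nat.choose (t.1 + t.2.1 + t.2.2) 2 +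
              2 * t.2.1 + 2 * t.2.2 + t.1) *
          x ^ (2 * t.1 + 2 * t.2.2 + t.2.1) * y ^ (2 * t.2.1 + 2 * t.2.2 + t.1) /
          (qPoch q q t.1 * qPoch q q t.2.1 * qPoch q q t.2.2))
      = qPochInf (-(x ^ 2 * y * q)) q *
        ∑' m : ℕ,
          qPoch (-x) q m * q ^ (Nat.choose m 2 + 2 * m) * (x * y ^ 2) ^ m /
            (qPoch q q m * qPoch (-(x ^ 2 * y * q)) q m) := by
  have hP := qPoch_qq_ne_zero hq
  -- nonvanishing of (-(x^2 y q); q)_n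
  have hone : ∀ k : ℕ, 1 + (x^2*y*q) * q ^ k ≠ 0 := by
    intro k h0
    apply hxy k
    have : x^2*y*q^(k+1) = x^2*y*q*q^k := by rw [pow_succ']; ring
    rw [this]
    linear_combination h0
  have hPneg : ∀ n : ℕ, qPoch (-(x^2*y*q)) q n ≠ 0 := by
    intro n
    rw [qPoch_def]
    apply Finset.prod_ne_zero_iff.mpr
    intro k _
    have := hone k
    intro h0
    apply this
    linear_combination h0
  -- the master triple-indexed family
  set U : ℕ × ℕ × ℕ → ℂ := fun p =>
    q ^ (p.2.1.choose 2 + (p.1+p.2.1+p.2.2).choose 2 + 2*p.1 + 2*p.2.1 + p.2.2) *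
      x ^ (p.1 + 2*p.2.1 + 2*p.2.2) * y ^ (2*p.1 + 2*p.2.1 + p.2.2) /
      (qPoch q q p.1 * qPoch q q p.2.1 * qPoch q q p.2.2) with hUdef
  -- Step 1 : LHS = ∑' U
  have step1 : (∑' t : ℕ × ℕ × ℕ,
        q ^ (Nat.choose t.2.2 2 + Nat.choose (t.1 + t.2.1 + t.2.2) 2 +
              2 * t.2.1 + 2 * t.2.2 + t.1) *
          x ^ (2 * t.1 + 2 * t.2.2 + t.2.1) * y ^ (2 * t.2.1 + 2 * t.2.2 + t.1) /
          (qPoch q q t.1 * qPoch q q t.2.1 * qPoch q q t.2.2)) = ∑' p, U p := by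
    rw [← Equiv.tsum_eq (⟨fun p => (p.2.1, p.2.2, p.1), fun p => (p.2.2, p.1, p.2.1),
        fun p => rfl, fun p => rfl⟩ : (ℕ × ℕ × ℕ) ≃ (ℕ × ℕ × ℕ)) U]
    apply tsum_congr
    rintro ⟨a, b, c⟩
    show _ = U (b, c, a)
    rw [hUdef]
    simp only
    rw [show b+c+a = a+b+c from by omega, show b + 2*c + 2*a = 2*a+2*c+b from by omega]
    ring
  -- Step 2 : summability
  have hU : Summable U := by
    set X := max 1 ‖x‖ with hX
    set Y := max 1 ‖y‖ with hY
    have hX1 : (1:ℝ) ≤ X := le_max_left _ _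
    have hY1 : (1:ℝ) ≤ Y := le_max_left _ _
    set M : ℝ := X^2 * Y^2 with hM
    have hM0 : 0 ≤ M := by positivity
    set f : ℕ → ℝ := fun a => ‖q‖ ^ (a.choose 2) * M ^ a / ‖qPoch q q a‖ with hf
    have hfs : Summable f := summable_base hq M hM0
    have hf0 : ∀ a, 0 ≤ f a := fun a => by
      rw [hf]
      positivity
    have h23 : Summable (fun p : ℕ × ℕ => f p.1 * f p.2) :=
      hfs.mul_of_nonneg hfs hf0 hf0
    have h123 : Summable (fun p : ℕ × ℕ × ℕ => f p.1 * (f p.2.1 * f p.2.2)) :=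
      hfs.mul_of_nonneg h23 hf0 (fun p => mul_nonneg (hf0 _) (hf0 _))
    apply Summable.of_norm_bounded h123
    rintro ⟨i, j, k⟩
    have hkey : ‖U (i,j,k)‖ =
        ‖q‖ ^ (j.choose 2 + (i+j+k).choose 2 + 2*i + 2*j + k) *
        ‖x‖ ^ (i + 2*j + 2*k) * ‖y‖ ^ (2*i + 2*j + k) /
        (‖qPoch q q i‖ * ‖qPoch q q j‖ * ‖qPoch q q k‖) := by
      rw [hUdef]
      simp only [norm_div, norm_mul, norm_pow]
    have hkeyR : f i * (f j * f k) =
        ‖q‖ ^ (i.choose 2 + j.choose 2 + k.choose 2) * M ^ (i+j+k) /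
        (‖qPoch q q i‖ * ‖qPoch q q j‖ * ‖qPoch q q k‖) := by
      simp only [hf]
      rw [div_mul_div_comm, div_mul_div_comm, pow_add, pow_add, pow_add, pow_add]
      ring
    have hnum : ‖q‖ ^ (j.choose 2 + (i+j+k).choose 2 + 2*i + 2*j + k) *
        ‖x‖ ^ (i + 2*j + 2*k) * ‖y‖ ^ (2*i + 2*j + k)
        ≤ ‖q‖ ^ (i.choose 2 + j.choose 2 + k.choose 2) * M ^ (i+j+k) := by
      have hq1 : ‖q‖ ^ (j.choose 2 + (i+j+k).choose 2 + 2*i + 2*j + k)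
          ≤ ‖q‖ ^ (i.choose 2 + j.choose 2 + k.choose 2) := by
        apply pow_le_pow_of_le_one (norm_nonneg q) hq.le
        have h1 := choose2_add (i+j) k
        have h2 := choose2_add i j
        omega
      have hx1 : ‖x‖ ^ (i + 2*j + 2*k) ≤ X ^ (2*(i+j+k)) := by
        calc ‖x‖ ^ (i + 2*j + 2*k) ≤ X ^ (i + 2*j + 2*k) :=
              pow_le_pow_left₀ (norm_nonneg x) (le_max_right _ _) _
          _ ≤ X ^ (2*(i+j+k)) := pow_le_pow_right₀ hX1 (by omega)
      have hy1 : ‖y‖ ^ (2*i + 2*j + k) ≤ Y ^ (2*(i+j+k)) := by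
        calc ‖y‖ ^ (2*i + 2*j + k) ≤ Y ^ (2*i + 2*j + k) :=
              pow_le_pow_left₀ (norm_nonneg y) (le_max_right _ _) _
          _ ≤ Y ^ (2*(i+j+k)) := pow_le_pow_right₀ hY1 (by omega)
      calc ‖q‖ ^ (j.choose 2 + (i+j+k).choose 2 + 2*i + 2*j + k) *
            ‖x‖ ^ (i + 2*j + 2*k) * ‖y‖ ^ (2*i + 2*j + k)
          ≤ ‖q‖ ^ (i.choose 2 + j.choose 2 + k.choose 2) * X ^ (2*(i+j+k)) * Y ^ (2*(i+j+k)) := by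
            have h0q : (0:ℝ) ≤ ‖q‖ ^ (i.choose 2 + j.choose 2 + k.choose 2) := by positivity
            apply mul_le_mul (mul_le_mul hq1 hx1 (by positivity) h0q) hy1 (by positivity)
            positivity
        _ = ‖q‖ ^ (i.choose 2 + j.choose 2 + k.choose 2) * M ^ (i+j+k) := by
            rw [hM, mul_pow, ← pow_mul, ← pow_mul]
            ring
    rw [hkey, hkeyR]
    gcongr
  -- Step 3 : inner sum over k
  set A : ℕ → ℕ → ℂ := fun i j =>
    q ^ (j.choose 2 + (i+j).choose 2 + 2*(i+j)) * x ^ (i + 2*j) * y ^ (2*(i+j)) /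
      (qPoch q q i * qPoch q q j) with hAdef
  have hinner : ∀ i j k : ℕ, U (i,j,k) = A i j * eulerT q (x^2*y*q^(i+j+1)) k := by
    intro i j k
    rw [hUdef, hAdef, eulerT_def]
    simp only
    rw [show (i+j+k).choose 2 = (i+j).choose 2 + k.choose 2 + (i+j)*k from choose2_add (i+j) k]
    field_simp [hP i, hP j, hP k]
    ring
  have hinnersum : ∀ i j : ℕ, ∑' k, U (i,j,k) = A i j * eulerF q (x^2*y*q^(i+j+1)) := by
    intro i j
    rw [eulerF_def, ← tsum_mul_left]
    exact tsum_congr fun k => hinner i j k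
  have hW : Summable (fun w : (ℕ×ℕ)×ℕ => U (w.1.1, w.1.2, w.2)) :=
    (Equiv.prodAssoc ℕ ℕ ℕ).summable_iff.mpr hU
  have hsplit : ∑' p, U p = ∑' ij : ℕ×ℕ, ∑' k, U (ij.1, ij.2, k) := by
    rw [← (Equiv.prodAssoc ℕ ℕ ℕ).tsum_eq U]
    exact Summable.tsum_prod hW
  have hgsum : Summable (fun ij : ℕ×ℕ => A ij.1 ij.2 * eulerF q (x^2*y*q^(ij.1+ij.2+1))) := by
    refine (hW.prod).congr fun ij => ?_
    exact hinnersum ij.1 ij.2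
  have hstep3 : ∑' p, U p
      = ∑' n : ℕ, ∑ p ∈ Finset.HasAntidiagonal.antidiagonal n, A p.1 p.2 * eulerF q (x^2*y*q^(p.1+p.2+1)) := by
    rw [hsplit, tsum_congr (fun ij : ℕ×ℕ => hinnersum ij.1 ij.2)]
    exact tsum_antidiag _ hgsum
  -- Step 4 : evaluate each antidiagonal sum
  have hn : ∀ n : ℕ, ∑ p ∈ Finset.HasAntidiagonal.antidiagonal n, A p.1 p.2 * eulerF q (x^2*y*q^(p.1+p.2+1))
      = eulerF q (x^2*y*q) *
        (qPoch (-x) q n * q ^ (n.choose 2 + 2*n) * (x*y^2)^n /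
          (qPoch q q n * qPoch (-(x^2*y*q)) q n)) := by
    intro n
    rw [Finset.Nat.sum_antidiagonal_eq_sum_range_succ_mk]
    have hterm : ∀ i ∈ Finset.range (n+1),
        A i (n-i) * eulerF q (x^2*y*q^(i+(n-i)+1))
        = (q ^ ((n-i).choose 2) * x^(n-i) / (qPoch q q (n-i) * qPoch q q (n-(n-i)))) *
          (q ^ (n.choose 2 + 2*n) * x^n * y^(2*n) * eulerF q (x^2*y*q^(n+1))) := by
      intro i hi
      have hin : i ≤ n := by
        have := Finset.mem_range.mp hi
        omega
      rw [hAdef]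
      simp only
      rw [show i + (n-i) = n from by omega, show n - (n-i) = i from by omega,
          show i + 2*(n-i) = (n-i) + n from by omega]
      rw [pow_add x]
      ring
    rw [Finset.sum_congr rfl hterm, ← Finset.sum_mul]
    have hrefl : (∑ i ∈ Finset.range (n+1),
        q ^ ((n-i).choose 2) * x^(n-i) / (qPoch q q (n-i) * qPoch q q (n-(n-i))))
        = ∑ j ∈ Finset.range (n+1), q ^ (j.choose 2) * x^j / (qPoch q q j * qPoch q q (n-j)) := by
      have h := Finset.sum_range_reflect
        (fun j => q ^ (j.choose 2) * x^j / (qPoch q q j * qPoch q q (n-j))) (n+1)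
      simpa using h
    rw [hrefl]
    have hqb := qbinom hq n x
    have hsplitE : eulerF q (x^2*y*q) = qPoch (-(x^2*y*q)) q n * eulerF q (x^2*y*q^(n+1)) := by
      have h := eulerF_prod hq (x^2*y*q) n
      rw [show (x^2*y*q)*q^n = x^2*y*q^(n+1) from by rw [pow_succ]; ring] at h
      rw [h, qPoch_def]
      congr 1
      exact Finset.prod_congr rfl fun k _ => by ring
    rw [hsplitE, ← hqb]
    field_simp [hP n, hPneg n]
    ring
  -- Step 5 : identify the infinite product
  have hinf : qPochInf (-(x^2*y*q)) q = eulerF q (x^2*y*q) := by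
    rw [qPochInf_def, ← euler_prod_eq hq _ hone]
    exact tprod_congr fun k => by ring
  -- Final assembly
  rw [step1, hstep3, tsum_congr hn, tsum_mul_left, hinf]
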